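/- If X is uniformly distributed on [m] and Y is a discrete random variable, then P_e(X|Y) ≥ 1 − 1/m − ρ_m(X;Y)(1 − 1/m). -/

import Mathlib

open Finset Real

noncomputable def maxCorr {α β : Type*} [Fintype α] [Fintype β]
    (r : α → β → ℝ) : ℝ :=
  sSup { t : ℝ | ∃ f : α → ℝ, ∃ g : β → ℝ,
    (∑ x, ∑ y, f x * r x y) = 0 ∧ (∑ x, ∑ y, g y * r x y) = 0 ∧
    (∑ x, ∑ y, (f x) ^ 2 * r x y) = 1 ∧ (∑ x, ∑ y, (g y) ^ 2 * r x y) = 1 ∧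
    t = ∑ x, ∑ y, f x * g y * r x y }

lemma corr_le_one {α β : Type*} [Fintype α] [Fintype β] {r : α → β → ℝ}
    (hr : ∀ x y, 0 ≤ r x y) {f : α → ℝ} {g : β → ℝ}
    (hf2 : (∑ x, ∑ y, (f x) ^ 2 * r x y) = 1)
    (hg2 : (∑ x, ∑ y, (g y) ^ 2 * r x y) = 1) :
    (∑ x, ∑ y, f x * g y * r x y) ≤ 1 := by
  have key := Finset.sum_mul_sq_le_sq_mul_sq Finset.univ
      (fun z : α × β => f z.1 * Real.sqrt (r z.1 z.2))
      (fun z : α × β => g z.2 * Real.sqrt (r z.1 z.2))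
  have e1 : ∑ z : α × β, (f z.1 * Real.sqrt (r z.1 z.2)) * (g z.2 * Real.sqrt (r z.1 z.2))
      = ∑ x, ∑ y, f x * g y * r x y := by
    rw [Fintype.sum_prod_type]
    exact Finset.sum_congr rfl fun x _ => Finset.sum_congr rfl fun y _ => by
      rw [mul_mul_mul_comm, Real.mul_self_sqrt (hr _ _)]
  have e2 : ∑ z : α × β, (f z.1 * Real.sqrt (r z.1 z.2)) ^ 2
      = ∑ x, ∑ y, (f x) ^ 2 * r x y := by
    rw [Fintype.sum_prod_type]
    exact Finset.sum_congr rfl fun x _ => Finset.sum_congr rfl fun y _ => by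
      rw [mul_pow, Real.sq_sqrt (hr _ _)]
  have e3 : ∑ z : α × β, (g z.2 * Real.sqrt (r z.1 z.2)) ^ 2
      = ∑ x, ∑ y, (g y) ^ 2 * r x y := by
    rw [Fintype.sum_prod_type]
    exact Finset.sum_congr rfl fun x _ => Finset.sum_congr rfl fun y _ => by
      rw [mul_pow, Real.sq_sqrt (hr _ _)]
  rw [e1, e2, e3, hf2, hg2] at key
  nlinarith [key]

lemma maxCorr_bddAbove {α β : Type*} [Fintype α] [Fintype β] {r : α → β → ℝ}
    (hr : ∀ x y, 0 ≤ r x y) :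
    BddAbove { t : ℝ | ∃ f : α → ℝ, ∃ g : β → ℝ,
    (∑ x, ∑ y, f x * r x y) = 0 ∧ (∑ x, ∑ y, g y * r x y) = 0 ∧
    (∑ x, ∑ y, (f x) ^ 2 * r x y) = 1 ∧ (∑ x, ∑ y, (g y) ^ 2 * r x y) = 1 ∧
    t = ∑ x, ∑ y, f x * g y * r x y } := by
  refine ⟨1, fun t ht => ?_⟩
  obtain ⟨f, g, _, _, hf2, hg2, rfl⟩ := ht
  exact corr_le_one hr hf2 hg2

lemma le_maxCorr {α β : Type*} [Fintype α] [Fintype β] {r : α → β → ℝ}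
    (hr : ∀ x y, 0 ≤ r x y) {t : ℝ}
    (ht : t ∈ { t : ℝ | ∃ f : α → ℝ, ∃ g : β → ℝ,
    (∑ x, ∑ y, f x * r x y) = 0 ∧ (∑ x, ∑ y, g y * r x y) = 0 ∧
    (∑ x, ∑ y, (f x) ^ 2 * r x y) = 1 ∧ (∑ x, ∑ y, (g y) ^ 2 * r x y) = 1 ∧
    t = ∑ x, ∑ y, f x * g y * r x y }) : t ≤ maxCorr r :=
  le_csSup (maxCorr_bddAbove hr) ht

lemma maxCorr_nonneg {α β : Type*} [Fintype α] [Fintype β] {r : α → β → ℝ}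
    (hr : ∀ x y, 0 ≤ r x y) : 0 ≤ maxCorr r := by
  rcases Set.eq_empty_or_nonempty { t : ℝ | ∃ f : α → ℝ, ∃ g : β → ℝ,
    (∑ x, ∑ y, f x * r x y) = 0 ∧ (∑ x, ∑ y, g y * r x y) = 0 ∧
    (∑ x, ∑ y, (f x) ^ 2 * r x y) = 1 ∧ (∑ x, ∑ y, (g y) ^ 2 * r x y) = 1 ∧
    t = ∑ x, ∑ y, f x * g y * r x y } with he | ⟨t, ht⟩
  · rw [maxCorr, he, Real.sSup_empty]
  · obtain ⟨f, g, hf0, hg0, hf2, hg2, htt⟩ := ht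
    have h1 : t ≤ maxCorr r := le_maxCorr hr ⟨f, g, hf0, hg0, hf2, hg2, htt⟩
    have h2 : -t ≤ maxCorr r := by
      refine le_maxCorr hr ⟨fun x => -f x, g, ?_, hg0, ?_, hg2, ?_⟩
      · simp only [neg_mul, Finset.sum_neg_distrib, hf0, neg_zero]
      · simpa using hf2
      · rw [htt]; simp [Finset.sum_neg_distrib]
    rcases le_total 0 t with h | h <;> linarith

/-- For uniformly distributed `X` on `[m]` and any (possibly randomized)
estimator `F` of `X` from `Y`, the error probability is at least
`1 − 1/m − ρₘ(X;Y)(1 − 1/m)`. -/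
theorem fano_maxCorr_bound_uniform {β : Type*} [Fintype β] (m : ℕ) (hm : 0 < m)
    (p : Fin m → β → ℝ) (hp0 : ∀ x y, 0 ≤ p x y) (hp1 : ∑ x, ∑ y, p x y = 1)
    (hunif : ∀ x, ∑ y, p x y = 1 / (m : ℝ))
    (F : β → Fin m → ℝ) (hF0 : ∀ y x, 0 ≤ F y x) (hF1 : ∀ y, ∑ x, F y x = 1) :
    1 - ∑ x, ∑ y, p x y * F y x ≥
      1 - 1 / (m : ℝ) - maxCorr p * (1 - 1 / (m : ℝ)) := by
  have hFle1 : ∀ y x, F y x ≤ 1 := fun y x =>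
    (hF1 y) ▸ Finset.single_le_sum (fun i _ => hF0 y i) (Finset.mem_univ x)
  have hmR0 : (0:ℝ) < (m:ℝ) := by exact_mod_cast hm
  have hmRne : (m:ℝ) ≠ 0 := ne_of_gt hmR0
  -- m = 1 case
  by_cases hm1 : m = 1
  · subst hm1
    have hPcle : ∑ x, ∑ y, p x y * F y x ≤ ∑ x, ∑ y, p x y := by
      refine Finset.sum_le_sum fun x _ => Finset.sum_le_sum fun y _ => ?_
      exact mul_le_of_le_one_right (hp0 x y) (hFle1 y x)
    rw [hp1] at hPcle
    have h0 : (1:ℝ) - 1 / ((1:ℕ):ℝ) = 0 := by norm_num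
    rw [h0, mul_zero]
    linarith
  -- now m ≥ 2
  have hm2 : 2 ≤ m := by omega
  have hmR2 : (2:ℝ) ≤ (m:ℝ) := by exact_mod_cast hm2
  have hinv_pos : 0 < 1 / (m:ℝ) := by positivity
  have hinv_lt : 1 / (m:ℝ) < 1 := by
    rw [div_lt_one hmR0]; linarith
  have h1m : 0 < 1 - 1 / (m:ℝ) := by linarith
  set q : β → ℝ := fun y => ∑ x, p x y with hqdef
  have hq0 : ∀ y, 0 ≤ q y := fun y => Finset.sum_nonneg fun x _ => hp0 x y
  have hq1 : ∑ y, q y = 1 := by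
    rw [hqdef]; rw [Finset.sum_comm]; exact hp1
  have hpq : ∀ a y, p a y ≤ q y := fun a y =>
    Finset.single_le_sum (fun i _ => hp0 i y) (Finset.mem_univ a)
  set μ : Fin m → ℝ := fun a => ∑ y, q y * F y a with hμdef
  have hμsum : ∑ a, μ a = 1 := by
    rw [hμdef]
    rw [Finset.sum_comm]
    calc ∑ y, ∑ a, q y * F y a = ∑ y, q y * ∑ a, F y a := by
          exact Finset.sum_congr rfl fun y _ => (Finset.mul_sum _ _ _).symm
      _ = ∑ y, q y := by
          exact Finset.sum_congr rfl fun y _ => by rw [hF1, mul_one]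
      _ = 1 := hq1
  set s : Fin m → ℝ := fun a => (∑ y, (F y a) ^ 2 * q y) - (μ a) ^ 2 with hsdef
  -- variance identity
  have hvar : ∀ a, ∑ y, q y * (F y a - μ a) ^ 2 = s a := by
    intro a
    have hexp : ∑ y, q y * (F y a - μ a) ^ 2
        = (∑ y, (F y a) ^ 2 * q y) - (2 * μ a) * (∑ y, q y * F y a)
          + (μ a) ^ 2 * (∑ y, q y) := by
      have hpt : ∀ y ∈ (Finset.univ : Finset β), q y * (F y a - μ a) ^ 2
          = (F y a) ^ 2 * q y - (2 * μ a) * (q y * F y a) + (μ a) ^ 2 * q y := by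
        intro y _; ring
      rw [Finset.sum_congr rfl hpt, Finset.sum_add_distrib, Finset.sum_sub_distrib,
        ← Finset.mul_sum, ← Finset.mul_sum]
    have hμa : ∑ y, q y * F y a = μ a := rfl
    rw [hexp, hq1, hμa]
    simp only [hsdef]
    ring
  have hs0 : ∀ a, 0 ≤ s a := fun a => by
    rw [← hvar a]
    exact Finset.sum_nonneg fun y _ => mul_nonneg (hq0 y) (sq_nonneg _)
  -- sum of variances bound
  have hsum_s : ∑ a, s a ≤ 1 - 1 / (m:ℝ) := by
    have h2mom : ∑ a, ∑ y, (F y a) ^ 2 * q y ≤ 1 := by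
      rw [Finset.sum_comm]
      calc ∑ y, ∑ a, (F y a) ^ 2 * q y = ∑ y, (∑ a, (F y a) ^ 2) * q y := by
            exact Finset.sum_congr rfl fun y _ => (Finset.sum_mul _ _ _).symm
        _ ≤ ∑ y, 1 * q y := by
            refine Finset.sum_le_sum fun y _ => mul_le_mul_of_nonneg_right ?_ (hq0 y)
            calc ∑ a, (F y a) ^ 2 ≤ ∑ a, F y a := by
                  refine Finset.sum_le_sum fun a _ => ?_
                  nlinarith [hF0 y a, hFle1 y a]
              _ = 1 := hF1 y
        _ = 1 := by simp [hq1]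
    have hμsq : 1 / (m:ℝ) ≤ ∑ a, (μ a) ^ 2 := by
      have := sq_sum_le_card_mul_sum_sq (s := (Finset.univ : Finset (Fin m))) (f := μ)
      rw [hμsum] at this
      simp only [Finset.card_univ, Fintype.card_fin] at this
      rw [div_le_iff₀ hmR0]
      nlinarith [this]
    have : ∑ a, s a = (∑ a, ∑ y, (F y a) ^ 2 * q y) - ∑ a, (μ a) ^ 2 := by
      rw [hsdef, Finset.sum_sub_distrib]
    linarith [this.le, this.ge]
  have hgq : ∀ a, ∑ y, (F y a - μ a) * q y = 0 := by
    intro a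
    have h1 : ∑ y, (F y a - μ a) * q y = (∑ y, q y * F y a) - μ a * ∑ y, q y := by
      rw [Finset.mul_sum, ← Finset.sum_sub_distrib]
      exact Finset.sum_congr rfl fun y _ => by ring
    have hμa : ∑ y, q y * F y a = μ a := rfl
    rw [h1, hq1, hμa]; ring
  -- covariance terms
  set Cov : Fin m → ℝ := fun a => ∑ y, p a y * (F y a - μ a) with hCovdef
  have hCovsum : (∑ x, ∑ y, p x y * F y x) - 1 / (m:ℝ) = ∑ a, Cov a := by
    have h1 : ∀ a : Fin m, Cov a = (∑ y, p a y * F y a) - μ a * (1 / (m:ℝ)) := by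
      intro a
      have : Cov a = (∑ y, p a y * F y a) - μ a * ∑ y, p a y := by
        rw [hCovdef]
        simp only
        rw [Finset.mul_sum, ← Finset.sum_sub_distrib]
        exact Finset.sum_congr rfl fun y _ => by ring
      rw [this, hunif a]
    rw [Finset.sum_congr rfl fun a _ => h1 a, Finset.sum_sub_distrib, ← Finset.sum_mul, hμsum,
      one_mul]
  set σX : ℝ := Real.sqrt (1 / (m:ℝ) * (1 - 1 / (m:ℝ))) with hσXdef
  have hσX_pos : 0 < σX := Real.sqrt_pos.mpr (by positivity)
  have hσX_sq : σX ^ 2 = 1 / (m:ℝ) * (1 - 1 / (m:ℝ)) :=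
    Real.sq_sqrt (by positivity)
  have hρ0 : 0 ≤ maxCorr p := maxCorr_nonneg hp0
  have hcov : ∀ a, Cov a ≤ maxCorr p * (σX * Real.sqrt (s a)) := by
    intro a
    rcases eq_or_lt_of_le (hs0 a) with hsa | hsa
    · -- zero variance: Cov a = 0
      have hz : ∀ y ∈ (Finset.univ : Finset β), q y * (F y a - μ a) ^ 2 = 0 := by
        have := hvar a
        rw [← hsa] at this
        exact fun y hy => (Finset.sum_eq_zero_iff_of_nonneg
          (fun y _ => mul_nonneg (hq0 y) (sq_nonneg _))).mp this y hy
      have hC0 : Cov a = 0 := by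
        rw [hCovdef]
        refine Finset.sum_eq_zero fun y _ => ?_
        rcases mul_eq_zero.mp (hz y (Finset.mem_univ y)) with h | h
        · have : p a y = 0 := le_antisymm (h ▸ hpq a y) (hp0 a y)
          rw [this, zero_mul]
        · have : F y a - μ a = 0 := by
            have := sq_eq_zero_iff.mp h
            exact this
          rw [this, mul_zero]
      rw [hC0, ← hsa, Real.sqrt_zero, mul_zero, mul_zero]
    · -- positive variance
      set σa : ℝ := Real.sqrt (s a) with hσadef
      have hσa_pos : 0 < σa := Real.sqrt_pos.mpr hsa
      have hσa_sq : σa ^ 2 = s a := Real.sq_sqrt (le_of_lt hsa)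
      set f : Fin m → ℝ := fun x => ((if x = a then (1:ℝ) else 0) - 1 / (m:ℝ)) / σX with hfdef
      set g : β → ℝ := fun y => (F y a - μ a) / σa with hgdef
      have hmem : Cov a / (σX * σa) ∈ { t : ℝ | ∃ f : Fin m → ℝ, ∃ g : β → ℝ,
          (∑ x, ∑ y, f x * p x y) = 0 ∧ (∑ x, ∑ y, g y * p x y) = 0 ∧
          (∑ x, ∑ y, (f x) ^ 2 * p x y) = 1 ∧ (∑ x, ∑ y, (g y) ^ 2 * p x y) = 1 ∧
          Cov a / (σX * σa) = ∑ x, ∑ y, f x * g y * p x y } := by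
        have hsum_ind : ∑ x : Fin m, ((if x = a then (1:ℝ) else 0) - 1 / (m:ℝ)) = 0 := by
          rw [Finset.sum_sub_distrib]
          simp only [Finset.sum_ite_eq', Finset.mem_univ, if_pos, Finset.sum_const,
            Finset.card_univ, Fintype.card_fin, nsmul_eq_mul]
          field_simp
          ring
        have hind2 : ∑ x : Fin m, ((if x = a then (1:ℝ) else 0) - 1 / (m:ℝ)) ^ 2
            = 1 - 1 / (m:ℝ) := by
          have hpt : ∀ x ∈ (Finset.univ : Finset (Fin m)),
              ((if x = a then (1:ℝ) else 0) - 1 / (m:ℝ)) ^ 2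
              = (1 - 2 / (m:ℝ)) * (if x = a then (1:ℝ) else 0) + 1 / (m:ℝ) ^ 2 := by
            intro x _
            by_cases h : x = a <;> simp [h] <;> ring
          rw [Finset.sum_congr rfl hpt, Finset.sum_add_distrib, ← Finset.mul_sum]
          simp only [Finset.sum_ite_eq', Finset.mem_univ, if_pos, Finset.sum_const,
            Finset.card_univ, Fintype.card_fin, nsmul_eq_mul, mul_one]
          field_simp
          ring
        refine ⟨f, g, ?_, ?_, ?_, ?_, ?_⟩
        · have e : ∀ x ∈ (Finset.univ : Finset (Fin m)), ∑ y, f x * p x y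
              = ((if x = a then (1:ℝ) else 0) - 1 / (m:ℝ)) * (1 / (m:ℝ)) / σX := by
            intro x _
            rw [← Finset.mul_sum, hunif x]
            simp only [hfdef]
            ring
          rw [Finset.sum_congr rfl e, ← Finset.sum_div, ← Finset.sum_mul, hsum_ind, zero_mul,
            zero_div]
        · rw [Finset.sum_comm]
          have e : ∀ y ∈ (Finset.univ : Finset β), ∑ x, g y * p x y
              = (F y a - μ a) * q y / σa := by
            intro y _
            rw [← Finset.mul_sum]
            have hqy : (∑ x, p x y) = q y := rfl
            rw [hqy]
            simp only [hgdef]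
            ring
          rw [Finset.sum_congr rfl e, ← Finset.sum_div, hgq a, zero_div]
        · have e : ∀ x ∈ (Finset.univ : Finset (Fin m)), ∑ y, (f x) ^ 2 * p x y
              = ((if x = a then (1:ℝ) else 0) - 1 / (m:ℝ)) ^ 2 * (1 / (m:ℝ)) / σX ^ 2 := by
            intro x _
            rw [← Finset.mul_sum, hunif x]
            simp only [hfdef]
            ring
          rw [Finset.sum_congr rfl e, ← Finset.sum_div, ← Finset.sum_mul, hind2, hσX_sq]
          have hne : ((m:ℝ) - 1) ≠ 0 := by linarith
          field_simp
        · rw [Finset.sum_comm]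
          have e : ∀ y ∈ (Finset.univ : Finset β), ∑ x, (g y) ^ 2 * p x y
              = q y * (F y a - μ a) ^ 2 / σa ^ 2 := by
            intro y _
            rw [← Finset.mul_sum]
            have hqy : (∑ x, p x y) = q y := rfl
            rw [hqy]
            simp only [hgdef]
            ring
          rw [Finset.sum_congr rfl e, ← Finset.sum_div, hvar a, hσa_sq]
          exact div_self (ne_of_gt hsa)
        · have t1 : ∑ x, ∑ y, (if x = a then (1:ℝ) else 0) * ((F y a - μ a) * p x y)
              = Cov a := by
            have e : ∀ x ∈ (Finset.univ : Finset (Fin m)),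
                ∑ y, (if x = a then (1:ℝ) else 0) * ((F y a - μ a) * p x y)
                = (if x = a then (∑ y, p a y * (F y a - μ a)) else 0) := by
              intro x _
              by_cases h : x = a
              · subst h
                have hpt2 : ∀ y ∈ (Finset.univ : Finset β),
                    (if x = x then (1:ℝ) else 0) * ((F y x - μ x) * p x y)
                    = p x y * (F y x - μ x) := by
                  intro y _
                  rw [if_pos rfl, one_mul]
                  ring
                rw [Finset.sum_congr rfl hpt2, if_pos rfl]
              · simp [h]
            rw [Finset.sum_congr rfl e]
            simp [Finset.sum_ite_eq']
            rfl
          have t2 : ∑ x, ∑ y, (F y a - μ a) * p x y = 0 := by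
            rw [Finset.sum_comm]
            have e : ∀ y ∈ (Finset.univ : Finset β),
                ∑ x, (F y a - μ a) * p x y = (F y a - μ a) * q y := by
              intro y _
              rw [← Finset.mul_sum]
            rw [Finset.sum_congr rfl e, hgq a]
          have split : ∑ x, ∑ y, f x * g y * p x y
              = (σX * σa)⁻¹ *
                  (∑ x, ∑ y, (if x = a then (1:ℝ) else 0) * ((F y a - μ a) * p x y))
                + (-(1 / (m:ℝ)) * (σX * σa)⁻¹) * (∑ x, ∑ y, (F y a - μ a) * p x y) := by
            rw [Finset.mul_sum, Finset.mul_sum, ← Finset.sum_add_distrib]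
            refine Finset.sum_congr rfl fun x _ => ?_
            rw [Finset.mul_sum, Finset.mul_sum, ← Finset.sum_add_distrib]
            refine Finset.sum_congr rfl fun y _ => ?_
            simp only [hfdef, hgdef]
            have hX : σX ≠ 0 := ne_of_gt hσX_pos
            have ha : σa ≠ 0 := ne_of_gt hσa_pos
            generalize (if x = a then (1:ℝ) else 0) = I
            field_simp
            ring
          rw [split, t1, t2, mul_zero, add_zero]
          ring
      have hle := le_maxCorr hp0 hmem
      have hpos : 0 < σX * σa := mul_pos hσX_pos hσa_pos
      calc Cov a = Cov a / (σX * σa) * (σX * σa) := by field_simp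
        _ ≤ maxCorr p * (σX * σa) := mul_le_mul_of_nonneg_right hle (le_of_lt hpos)
  have hkey : ∑ a, Cov a ≤ maxCorr p * (1 - 1 / (m:ℝ)) := by
    have step1 : ∑ a, Cov a ≤ maxCorr p * σX * ∑ a, Real.sqrt (s a) := by
      rw [Finset.mul_sum]
      refine Finset.sum_le_sum fun a _ => ?_
      calc Cov a ≤ maxCorr p * (σX * Real.sqrt (s a)) := hcov a
        _ = maxCorr p * σX * Real.sqrt (s a) := by ring
    have h3 : 0 ≤ ∑ a, Real.sqrt (s a) := Finset.sum_nonneg fun a _ => Real.sqrt_nonneg _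
    have step2 : ∑ a, Real.sqrt (s a) ≤ Real.sqrt ((m:ℝ) * (1 - 1 / (m:ℝ))) := by
      have h1 : (∑ a, Real.sqrt (s a)) ^ 2 ≤ (m:ℝ) * ∑ a, s a := by
        have hh := sq_sum_le_card_mul_sum_sq (s := (Finset.univ : Finset (Fin m)))
          (f := fun a => Real.sqrt (s a))
        simp only [Finset.card_univ, Fintype.card_fin] at hh
        calc (∑ a, Real.sqrt (s a)) ^ 2 ≤ (m:ℝ) * ∑ a, Real.sqrt (s a) ^ 2 := by
              exact_mod_cast hh
          _ = (m:ℝ) * ∑ a, s a := by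
              congr 1
              exact Finset.sum_congr rfl fun a _ => Real.sq_sqrt (hs0 a)
      have h2 : (m:ℝ) * ∑ a, s a ≤ (m:ℝ) * (1 - 1 / (m:ℝ)) :=
        mul_le_mul_of_nonneg_left hsum_s (le_of_lt hmR0)
      calc ∑ a, Real.sqrt (s a) = Real.sqrt ((∑ a, Real.sqrt (s a)) ^ 2) :=
            (Real.sqrt_sq h3).symm
        _ ≤ Real.sqrt ((m:ℝ) * (1 - 1 / (m:ℝ))) := Real.sqrt_le_sqrt (by linarith)
    have hσX_id : σX * Real.sqrt ((m:ℝ) * (1 - 1 / (m:ℝ))) = 1 - 1 / (m:ℝ) := by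
      rw [hσXdef, ← Real.sqrt_mul (by positivity)]
      rw [show 1 / (m:ℝ) * (1 - 1 / (m:ℝ)) * ((m:ℝ) * (1 - 1 / (m:ℝ)))
          = (1 - 1 / (m:ℝ)) ^ 2 by field_simp]
      exact Real.sqrt_sq (le_of_lt h1m)
    calc ∑ a, Cov a ≤ maxCorr p * σX * ∑ a, Real.sqrt (s a) := step1
      _ ≤ maxCorr p * σX * Real.sqrt ((m:ℝ) * (1 - 1 / (m:ℝ))) := by
          exact mul_le_mul_of_nonneg_left step2 (mul_nonneg hρ0 (le_of_lt hσX_pos))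
      _ = maxCorr p * (σX * Real.sqrt ((m:ℝ) * (1 - 1 / (m:ℝ)))) := by ring
      _ = maxCorr p * (1 - 1 / (m:ℝ)) := by rw [hσX_id]
  linarith [hCovsum, hkey]
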